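/- Let m be even, λ a negative real number, and H = εQ_n with ε = ±1. Then the n×n Jordan block B = J_n(λ) has no H-selfadjoint m-th root: there is no matrix A with A^m = B and HA = A*H. -/

import Mathlib

open Matrix

def jordanBlock (n : ℕ) (lam : ℂ) : Matrix (Fin n) (Fin n) ℂ :=
  fun i j => if (i : ℕ) = (j : ℕ) then lam else if (i : ℕ) + 1 = (j : ℕ) then 1 else 0

def backQ (n : ℕ) : Matrix (Fin n) (Fin n) ℂ :=
  fun i j => if (i : ℕ) + (j : ℕ) + 1 = n then 1 else 0

def dsum {n : ℕ} (A B : Matrix (Fin n) (Fin n) ℂ) :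
    Matrix (Fin (n + n)) (Fin (n + n)) ℂ :=
  Matrix.reindex finSumFinEquiv finSumFinEquiv (Matrix.fromBlocks A 0 0 B)

private lemma sum_pick {n : ℕ} (f : Fin n → ℂ) (t : ℕ) :
    (∑ k : Fin n, if t = (k : ℕ) then f k else 0) =
      if h : t < n then f ⟨t, h⟩ else 0 := by
  split_ifs with h
  · rw [Finset.sum_eq_single ⟨t, h⟩]
    · simp
    · intro b _ hb
      rw [if_neg]
      intro hc
      exact hb (Fin.ext hc.symm)
    · intro hmem; exact absurd (Finset.mem_univ _) hmem
  · apply Finset.sum_eq_zero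
    intro k _
    rw [if_neg]
    intro hc
    have := k.isLt
    omega

theorem no_H_selfadjoint_even_root_negative_block (n m : ℕ) (hn : 0 < n)
    (hm : 0 < m) (hme : Even m) (lam : ℝ) (hlam : lam < 0)
    (ε : ℝ) (hε : ε = 1 ∨ ε = -1) :
    ¬ ∃ A : Matrix (Fin n) (Fin n) ℂ,
        A ^ m = jordanBlock n (lam : ℂ) ∧
        ((ε : ℂ) • backQ n) * A = Aᴴ * ((ε : ℂ) • backQ n) := by
  rintro ⟨A, hA1, hA2⟩
  set z : Fin n := ⟨0, hn⟩ with hz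
  set w : Fin n := ⟨n - 1, by omega⟩ with hw
  have hz0 : (z : ℕ) = 0 := rfl
  have hw0 : (w : ℕ) = n - 1 := rfl
  -- A commutes with the Jordan block
  have hc : A * jordanBlock n (lam : ℂ) = jordanBlock n (lam : ℂ) * A := by
    rw [← hA1, ← pow_succ', ← pow_succ]
  -- key commutation relation on entries
  have key : ∀ i j : Fin n,
      (∑ k : Fin n, if (k : ℕ) + 1 = (j : ℕ) then A i k else 0) =
      (∑ k : Fin n, if (i : ℕ) + 1 = (k : ℕ) then A k j else 0) := by
    intro i j
    have h := congrFun (congrFun hc i) j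
    rw [Matrix.mul_apply, Matrix.mul_apply] at h
    have e1 : ∀ k : Fin n,
        A i k * jordanBlock n (lam : ℂ) k j =
          (lam : ℂ) * (if (j : ℕ) = (k : ℕ) then A i k else 0) +
            (if (k : ℕ) + 1 = (j : ℕ) then A i k else 0) := by
      intro k
      simp only [jordanBlock]
      split_ifs <;> (first | ring1 | (exfalso; omega))
    have e2 : ∀ k : Fin n,
        jordanBlock n (lam : ℂ) i k * A k j =
          (lam : ℂ) * (if (i : ℕ) = (k : ℕ) then A k j else 0) +
            (if (i : ℕ) + 1 = (k : ℕ) then A k j else 0) := by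
      intro k
      simp only [jordanBlock]
      split_ifs <;> (first | ring1 | (exfalso; omega))
    rw [Finset.sum_congr rfl (fun k _ => e1 k),
        Finset.sum_congr rfl (fun k _ => e2 k),
        Finset.sum_add_distrib, Finset.sum_add_distrib, ← Finset.mul_sum,
        ← Finset.mul_sum, sum_pick, sum_pick, dif_pos j.isLt, dif_pos i.isLt] at h
    simp only [Fin.eta] at h
    exact add_left_cancel h
  -- F1: first column of A is zero except the top entry
  have F1 : ∀ i : Fin n, (i : ℕ) ≠ 0 → A i z = 0 := by
    intro i hi
    have hi' : (i : ℕ) - 1 < n := by have := i.isLt; omega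
    have h := key ⟨(i : ℕ) - 1, hi'⟩ z
    have hL : (∑ k : Fin n,
        if (k : ℕ) + 1 = ((z : Fin n) : ℕ) then A ⟨(i : ℕ) - 1, hi'⟩ k else 0) = 0 := by
      apply Finset.sum_eq_zero
      intro k _
      rw [if_neg]
      rw [hz0]
      omega
    have hR : (∑ k : Fin n,
        if ((⟨(i : ℕ) - 1, hi'⟩ : Fin n) : ℕ) + 1 = (k : ℕ) then A k z else 0) = A i z := by
      have e : ∀ k : Fin n,
          (if ((⟨(i : ℕ) - 1, hi'⟩ : Fin n) : ℕ) + 1 = (k : ℕ) then A k z else 0)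
            = (if (i : ℕ) = (k : ℕ) then A k z else 0) := by
        intro k
        apply if_congr _ rfl rfl
        simp only [Fin.val_mk]
        omega
      rw [Finset.sum_congr rfl (fun k _ => e k), sum_pick, dif_pos i.isLt, Fin.eta]
    rw [hL, hR] at h
    exact h.symm
  -- diagonal shift
  have Fdiag : ∀ k : ℕ, ∀ hk : k + 1 < n,
      A ⟨k, by omega⟩ ⟨k, by omega⟩ = A ⟨k + 1, hk⟩ ⟨k + 1, hk⟩ := by
    intro k hk
    have h := key ⟨k, by omega⟩ ⟨k + 1, hk⟩
    have hL : (∑ k' : Fin n, if (k' : ℕ) + 1 = ((⟨k + 1, hk⟩ : Fin n) : ℕ)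
        then A ⟨k, by omega⟩ k' else 0) = A ⟨k, by omega⟩ ⟨k, by omega⟩ := by
      have e : ∀ k' : Fin n, (if (k' : ℕ) + 1 = ((⟨k + 1, hk⟩ : Fin n) : ℕ)
          then A ⟨k, by omega⟩ k' else 0)
            = (if k = (k' : ℕ) then A ⟨k, by omega⟩ k' else 0) := by
        intro k'
        apply if_congr _ rfl rfl
        simp only [Fin.val_mk]
        omega
      rw [Finset.sum_congr rfl (fun k' _ => e k'), sum_pick, dif_pos (by omega : k < n)]
    have hR : (∑ k' : Fin n, if ((⟨k, by omega⟩ : Fin n) : ℕ) + 1 = (k' : ℕ)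
        then A k' ⟨k + 1, hk⟩ else 0) = A ⟨k + 1, hk⟩ ⟨k + 1, hk⟩ := by
      have e : ∀ k' : Fin n, (if ((⟨k, by omega⟩ : Fin n) : ℕ) + 1 = (k' : ℕ)
          then A k' ⟨k + 1, hk⟩ else 0)
            = (if k + 1 = (k' : ℕ) then A k' ⟨k + 1, hk⟩ else 0) := by
        intro k'
        apply if_congr _ rfl rfl
        simp only [Fin.val_mk]
      rw [Finset.sum_congr rfl (fun k' _ => e k'), sum_pick, dif_pos hk]
    rw [hL, hR] at h
    exact h
  -- F2: constant diagonal
  have F2 : ∀ k : ℕ, ∀ hk : k < n, A ⟨k, hk⟩ ⟨k, hk⟩ = A z z := by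
    intro k
    induction k with
    | zero => intro hk; rfl
    | succ k ih =>
      intro hk
      rw [← Fdiag k hk]
      exact ih (by omega)
  -- strip ε
  have hεne : (ε : ℂ) ≠ 0 := by
    rcases hε with h | h <;> rw [h] <;> norm_num
  have hQ : backQ n * A = Aᴴ * backQ n := by
    rw [Matrix.smul_mul, Matrix.mul_smul] at hA2
    exact smul_right_injective (Matrix (Fin n) (Fin n) ℂ) hεne hA2
  -- F3: A 0 0 = conj (A (n-1) (n-1))
  have F3 : A z z = star (A w w) := by
    have h := congrFun (congrFun hQ w) z
    rw [Matrix.mul_apply, Matrix.mul_apply] at h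
    have hL : (∑ k : Fin n, backQ n w k * A k z) = A z z := by
      have e : ∀ k : Fin n, backQ n w k * A k z = (if 0 = (k : ℕ) then A k z else 0) := by
        intro k
        have hk := k.isLt
        simp only [backQ]
        by_cases h0 : (0 : ℕ) = (k : ℕ)
        · rw [if_pos h0, if_pos (show (w:ℕ) + (k:ℕ) + 1 = n by rw [hw0]; omega), one_mul]
        · rw [if_neg h0, if_neg (show ¬((w:ℕ) + (k:ℕ) + 1 = n) by rw [hw0]; omega), zero_mul]
      rw [Finset.sum_congr rfl (fun k _ => e k), sum_pick, dif_pos hn]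
    have hR : (∑ k : Fin n, Aᴴ w k * backQ n k z) = star (A w w) := by
      have e : ∀ k : Fin n, Aᴴ w k * backQ n k z
          = (if (n - 1 : ℕ) = (k : ℕ) then star (A k w) else 0) := by
        intro k
        have hk := k.isLt
        simp only [backQ, Matrix.conjTranspose_apply]
        by_cases h0 : (n - 1 : ℕ) = (k : ℕ)
        · rw [if_pos h0, if_pos (show (k:ℕ) + (z:ℕ) + 1 = n by rw [hz0]; omega), mul_one]
        · rw [if_neg h0, if_neg (show ¬((k:ℕ) + (z:ℕ) + 1 = n) by rw [hz0]; omega), mul_zero]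
      rw [Finset.sum_congr rfl (fun k _ => e k), sum_pick, dif_pos (by omega : n - 1 < n)]
    rw [hL, hR] at h
    exact h
  -- F4: diagonal entry of powers
  have F4 : ∀ k : ℕ, (A ^ k) z z = (A z z) ^ k := by
    intro k
    induction k with
    | zero => simp [Matrix.one_apply]
    | succ k ih =>
      rw [pow_succ, Matrix.mul_apply, Finset.sum_eq_single z]
      · rw [ih, pow_succ]
      · intro b _ hb
        rw [F1 b (fun hb0 => hb (Fin.ext (by rw [hb0, hz0]))), mul_zero]
      · intro hmem; exact absurd (Finset.mem_univ _) hmem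
  -- conclusion
  have hww : A w w = A z z := F2 (n - 1) (by omega)
  have hreal : A z z = star (A z z) := by rw [hww] at F3; exact F3
  have him : (A z z).im = 0 := by
    have := Complex.conj_eq_iff_im.mp (by rw [← Complex.star_def]; exact hreal.symm)
    exact this
  have hval : (A z z) ^ m = (lam : ℂ) := by
    rw [← F4 m, hA1]
    simp [jordanBlock]
  have hAre : A z z = ((A z z).re : ℂ) := by
    rw [Complex.ext_iff]
    simp [him]
  rw [hAre, ← Complex.ofReal_pow] at hval
  have hval' : ((A z z).re) ^ m = lam := by exact_mod_cast hval
  have hnn : (0 : ℝ) ≤ ((A z z).re) ^ m := hme.pow_nonneg _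
  linarith
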